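/- Let μ be a nonzero finite signed measure on [0,1] with a density whose sign pattern is +,−,+ (positive on (0,a), negative on (a,b), positive on (b,1), allowing degenerate cases a = 0 or b = 1). Assume ∫₀¹ dμ = 0 and ∫₀¹ x dμ(x) ≤ 0. Then ∫₀¹ φ(x) dμ(x) > 0 for every strictly decreasing, strictly convex C¹ function φ on [0,1]. -/

import Mathlib

open MeasureTheory Set

lemma aux_fubini (ρ w : ℝ → ℝ) (hρ : IntegrableOn ρ (Set.Icc 0 1))
    (hw : ContinuousOn w (Set.Icc 0 1)) :
    ∫ x in Set.Icc (0:ℝ) 1, w x * (∫ t in Set.Ioc (0:ℝ) x, ρ t) =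
      ∫ t in Set.Icc (0:ℝ) 1, ρ t * (∫ x in Set.Icc t 1, w x) := by
  set μ := volume.restrict (Set.Icc (0:ℝ) 1) with hμ
  set F : ℝ → ℝ → ℝ := fun x t => if t ≤ x then w x * ρ t else 0 with hF
  have hwint : Integrable w μ := hw.integrableOn_Icc
  have hρint : Integrable ρ μ := hρ
  have hbase : Integrable (fun q : ℝ × ℝ => w q.1 * ρ q.2) (μ.prod μ) :=
    hwint.mul_prod hρint
  have hFeq : (Function.uncurry F) =
      Set.indicator {q : ℝ × ℝ | q.2 ≤ q.1} (fun q => w q.1 * ρ q.2) := by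
    funext q
    by_cases h : q.2 ≤ q.1 <;>
      simp [Function.uncurry, hF, Set.indicator_apply, Set.mem_setOf_eq, h]
  have hmeasset : MeasurableSet {q : ℝ × ℝ | q.2 ≤ q.1} :=
    measurableSet_le measurable_snd measurable_fst
  have hFint : Integrable (Function.uncurry F) (μ.prod μ) := by
    rw [hFeq]; exact hbase.indicator hmeasset
  have hswap : ∫ x, ∫ t, F x t ∂μ ∂μ = ∫ t, ∫ x, F x t ∂μ ∂μ :=
    integral_integral_swap hFint
  have hL : ∫ x in Set.Icc (0:ℝ) 1, w x * (∫ t in Set.Ioc (0:ℝ) x, ρ t) =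
      ∫ x, ∫ t, F x t ∂μ ∂μ := by
    rw [hμ]
    refine setIntegral_congr_fun measurableSet_Icc (fun x hx => ?_)
    have h1 : (fun t => F x t) = Set.indicator (Set.Iic x) (fun t => w x * ρ t) := by
      funext t
      by_cases h : t ≤ x <;> simp [hF, Set.indicator_apply, h]
    rw [h1, setIntegral_indicator measurableSet_Iic]
    have h2 : Set.Icc (0:ℝ) 1 ∩ Set.Iic x = Set.Icc 0 x := by
      ext z
      simp only [Set.mem_inter_iff, Set.mem_Icc, Set.mem_Iic]
      constructor
      · rintro ⟨⟨h0, _⟩, hzx⟩; exact ⟨h0, hzx⟩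
      · rintro ⟨h0, hzx⟩; exact ⟨⟨h0, hzx.trans hx.2⟩, hzx⟩
    rw [h2, integral_const_mul, integral_Icc_eq_integral_Ioc]
  have hR : ∫ t in Set.Icc (0:ℝ) 1, ρ t * (∫ x in Set.Icc t 1, w x) =
      ∫ t, ∫ x, F x t ∂μ ∂μ := by
    rw [hμ]
    refine setIntegral_congr_fun measurableSet_Icc (fun t ht => ?_)
    have h1 : (fun x => F x t) = Set.indicator (Set.Ici t) (fun x => w x * ρ t) := by
      funext x
      by_cases h : t ≤ x <;> simp [hF, Set.indicator_apply, h]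
    rw [h1, setIntegral_indicator measurableSet_Ici]
    have h2 : Set.Icc (0:ℝ) 1 ∩ Set.Ici t = Set.Icc t 1 := by
      ext z
      simp only [Set.mem_inter_iff, Set.mem_Icc, Set.mem_Ici]
      constructor
      · rintro ⟨⟨_, h1z⟩, hzt⟩; exact ⟨hzt, h1z⟩
      · rintro ⟨hzt, h1z⟩; exact ⟨⟨ht.1.trans hzt, h1z⟩, hzt⟩
    rw [h2, integral_mul_const, mul_comm]
  rw [hL, hR, hswap]

lemma aux_pos (f : ℝ → ℝ) (p q : ℝ) (hf : IntegrableOn f (Set.Ioo p q)) (hpq : p < q)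
    (hsign : ∀ z ∈ Set.Ioo p q, 0 < f z) : 0 < ∫ z in Set.Ioo p q, f z := by
  rw [setIntegral_pos_iff_support_of_nonneg_ae
    (ae_restrict_of_forall_mem measurableSet_Ioo fun z hz => (hsign z hz).le) hf]
  have hsub : Set.Ioo p q ⊆ Function.support f ∩ Set.Ioo p q :=
    fun z hz => ⟨Function.mem_support.mpr (hsign z hz).ne', hz⟩
  calc (0:ENNReal) < volume (Set.Ioo p q) := by
        rw [Real.volume_Ioo]; exact ENNReal.ofReal_pos.mpr (by linarith)
    _ ≤ volume (Function.support f ∩ Set.Ioo p q) := measure_mono hsub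

theorem stmt_7 (ρ : ℝ → ℝ) (hρ : IntegrableOn ρ (Set.Icc 0 1))
    (a b : ℝ) (ha0 : 0 ≤ a) (hab : a ≤ b) (hb1 : b ≤ 1)
    (hpos1 : ∀ x ∈ Set.Ioo (0 : ℝ) a, 0 < ρ x)
    (hneg : ∀ x ∈ Set.Ioo a b, ρ x < 0)
    (hpos2 : ∀ x ∈ Set.Ioo b (1 : ℝ), 0 < ρ x)
    (hnonzero : ¬ (∀ᵐ x ∂volume.restrict (Set.Icc (0 : ℝ) 1), ρ x = 0))
    (hmass : ∫ x in Set.Icc (0 : ℝ) 1, ρ x = 0)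
    (hmom : ∫ x in Set.Icc (0 : ℝ) 1, x * ρ x ≤ 0)
    (φ : ℝ → ℝ) (hφc : ContDiffOn ℝ 1 φ (Set.Icc 0 1))
    (hφdec : StrictAntiOn φ (Set.Icc 0 1))
    (hφconv : StrictConvexOn ℝ (Set.Icc 0 1) φ) :
    0 < ∫ x in Set.Icc (0 : ℝ) 1, φ x * ρ x := by
  -- the primitive K
  set K : ℝ → ℝ := fun x => ∫ t in Set.Ioc (0:ℝ) x, ρ t with hK
  have hKcont : ContinuousOn K (Set.Icc 0 1) := intervalIntegral.continuousOn_primitive hρ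
  have hK0 : K 0 = 0 := by simp [hK]
  have hK1 : K 1 = 0 := by
    rw [hK]; dsimp only; rw [← integral_Icc_eq_integral_Ioc]; exact hmass
  -- integrability on subintervals
  have hρsub : ∀ u v : ℝ, 0 ≤ u → v ≤ 1 → IntegrableOn ρ (Set.Ioo u v) := by
    intro u v hu hv
    exact hρ.mono (fun t ht => ⟨hu.trans ht.1.le, ht.2.le.trans hv⟩) le_rfl
  -- difference formula
  have hKdiff : ∀ x y : ℝ, 0 ≤ x → x ≤ y → y ≤ 1 →
      K y - K x = ∫ t in Set.Ioo x y, ρ t := by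
    intro x y hx hxy hy
    have hunion : Set.Ioc 0 y = Set.Ioc 0 x ∪ Set.Ioc x y :=
      (Set.Ioc_union_Ioc_eq_Ioc hx hxy).symm
    have hdisj : Disjoint (Set.Ioc (0:ℝ) x) (Set.Ioc x y) := Set.Ioc_disjoint_Ioc_of_le le_rfl
    have hi1 : IntegrableOn ρ (Set.Ioc 0 x) :=
      hρ.mono (fun t ht => ⟨ht.1.le, ht.2.trans (hxy.trans hy)⟩) le_rfl
    have hi2 : IntegrableOn ρ (Set.Ioc x y) :=
      hρ.mono (fun t ht => ⟨hx.trans ht.1.le, ht.2.trans hy⟩) le_rfl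
    have hoo : ∫ t in Set.Ioc x y, ρ t = ∫ t in Set.Ioo x y, ρ t :=
      integral_Ioc_eq_integral_Ioo
    rw [hK]; dsimp only
    rw [hunion, setIntegral_union hdisj measurableSet_Ioc hi1 hi2, hoo]
    ring
  -- monotonicity on a sign interval
  have hmono : ∀ p q : ℝ, 0 ≤ p → q ≤ 1 → (∀ z ∈ Set.Ioo p q, 0 ≤ ρ z) →
      ∀ x y : ℝ, p ≤ x → x ≤ y → y ≤ q → K x ≤ K y := by
    intro p q hp hq hsign x y hpx hxy hyq
    have h1 : K y - K x = ∫ t in Set.Ioo x y, ρ t :=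
      hKdiff x y (hp.trans hpx) hxy (hyq.trans hq)
    have h2 : 0 ≤ ∫ t in Set.Ioo x y, ρ t :=
      setIntegral_nonneg measurableSet_Ioo fun z hz =>
        hsign z ⟨hpx.trans_lt hz.1, hz.2.trans_le hyq⟩
    linarith
  have hanti : ∀ x y : ℝ, a ≤ x → x ≤ y → y ≤ b → K y ≤ K x := by
    intro x y hax hxy hyb
    have h1 : K y - K x = ∫ t in Set.Ioo x y, ρ t :=
      hKdiff x y (ha0.trans hax) hxy (hyb.trans hb1)
    have h2 : ∫ t in Set.Ioo x y, ρ t ≤ 0 :=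
      setIntegral_nonpos measurableSet_Ioo fun z hz =>
        (hneg z ⟨hax.trans_lt hz.1, hz.2.trans_le hyb⟩).le
    linarith
  -- K ≥ 0 on [0,a], K ≤ 0 on [b,1]
  have hKa : ∀ x ∈ Set.Icc 0 a, 0 ≤ K x := by
    intro x hx
    have := hmono 0 a le_rfl (hab.trans hb1) (fun z hz => (hpos1 z hz).le) 0 x le_rfl hx.1 hx.2
    rwa [hK0] at this
  have hKb : ∀ x ∈ Set.Icc b 1, K x ≤ 0 := by
    intro x hx
    have := hmono b 1 (ha0.trans hab) le_rfl (fun z hz => (hpos2 z hz).le) x 1 hx.1 hx.2 le_rfl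
    rwa [hK1] at this
  -- the sign change point c
  set S : Set ℝ := Set.Icc a b ∩ {x | 0 ≤ K x} with hS
  have hScompact : IsCompact S := by
    have hclosed : IsClosed S :=
      ContinuousOn.preimage_isClosed_of_isClosed
        (hKcont.mono (Set.Icc_subset_Icc ha0 hb1)) isClosed_Icc isClosed_Ici
    exact isCompact_Icc.of_isClosed_subset hclosed Set.inter_subset_left
  have haS : a ∈ S := ⟨⟨le_rfl, hab⟩, hKa a ⟨ha0, le_rfl⟩⟩
  set c : ℝ := sSup S with hc
  have hcS : c ∈ S := hScompact.sSup_mem ⟨a, haS⟩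
  have hac : a ≤ c := hcS.1.1
  have hcb : c ≤ b := hcS.1.2
  have hKc : 0 ≤ K c := hcS.2
  have hc01 : c ∈ Set.Icc (0:ℝ) 1 := ⟨ha0.trans hac, hcb.trans hb1⟩
  -- sign of K relative to c
  have hKpos : ∀ x ∈ Set.Icc (0:ℝ) 1, x ≤ c → 0 ≤ K x := by
    intro x hx hxc
    rcases le_or_gt x a with h | h
    · exact hKa x ⟨hx.1, h⟩
    · exact hKc.trans (hanti x c h.le hxc hcb)
  have hKneg : ∀ x ∈ Set.Icc (0:ℝ) 1, c < x → K x ≤ 0 := by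
    intro x hx hcx
    rcases le_or_gt b x with h | h
    · exact hKb x ⟨h, hx.2⟩
    · by_contra hcon
      push_neg at hcon
      have hxS : x ∈ S := ⟨⟨hac.trans hcx.le, h.le⟩, hcon.le⟩
      have : x ≤ c := le_csSup hScompact.bddAbove hxS
      linarith
  -- the derivative g of φ
  set g : ℝ → ℝ := derivWithin φ (Set.Icc 0 1) with hg
  have hφdiff : DifferentiableOn ℝ φ (Set.Icc 0 1) := hφc.differentiableOn one_ne_zero
  have hgcont : ContinuousOn g (Set.Icc 0 1) :=
    hφc.continuousOn_derivWithin (uniqueDiffOn_Icc zero_lt_one) le_rfl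
  have hgmono : StrictMonoOn g (Set.Icc 0 1) := hφconv.strictMonoOn_derivWithin hφdiff
  have hgle : ∀ y ∈ Set.Icc (0:ℝ) 1, g y ≤ 0 := by
    intro y hy
    have hd : HasDerivWithinAt φ (g y) (Set.Icc 0 1) y := (hφdiff y hy).hasDerivWithinAt
    rw [hasDerivWithinAt_iff_tendsto_slope] at hd
    have hne : (nhdsWithin y (Set.Icc (0:ℝ) 1 \ {y})).NeBot := by
      rcases lt_or_ge y 1 with h1 | h1
      · have hsub : Set.Ioo y 1 ⊆ Set.Icc (0:ℝ) 1 \ {y} := fun z hz =>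
          ⟨⟨hy.1.trans hz.1.le, hz.2.le⟩, by simpa using hz.1.ne'⟩
        have hmem : y ∈ closure (Set.Ioo y 1) := by
          rw [closure_Ioo h1.ne]; exact ⟨le_rfl, h1.le⟩
        have h2 : (nhdsWithin y (Set.Ioo y 1)).NeBot :=
          mem_closure_iff_nhdsWithin_neBot.mp hmem
        exact h2.mono (nhdsWithin_mono y hsub)
      · have hy1 : y = 1 := le_antisymm hy.2 h1
        have hsub : Set.Ioo (0:ℝ) 1 ⊆ Set.Icc (0:ℝ) 1 \ {y} := fun z hz =>
          ⟨⟨hz.1.le, hz.2.le⟩, fun hzy => by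
            simp only [Set.mem_singleton_iff] at hzy
            rw [hy1] at hzy; exact absurd hzy hz.2.ne⟩
        have hmem : y ∈ closure (Set.Ioo (0:ℝ) 1) := by
          rw [closure_Ioo one_ne_zero.symm]; exact hy
        have h2 : (nhdsWithin y (Set.Ioo (0:ℝ) 1)).NeBot :=
          mem_closure_iff_nhdsWithin_neBot.mp hmem
        exact h2.mono (nhdsWithin_mono y hsub)
    refine le_of_tendsto hd ?_
    filter_upwards [self_mem_nhdsWithin] with z hz
    have hz1 : z ∈ Set.Icc (0:ℝ) 1 := hz.1
    have hzy : z ≠ y := by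
      intro hh; exact hz.2 (by simp [hh])
    rw [slope_def_field]
    rcases lt_or_gt_of_ne hzy with h | h
    · have : φ y < φ z := hφdec hz1 hy h
      apply div_nonpos_of_nonneg_of_nonpos <;> linarith
    · have : φ z < φ y := hφdec hy hz1 h
      apply div_nonpos_of_nonpos_of_nonneg <;> linarith
  have hgc : g c ≤ 0 := hgle c hc01
  -- FTC : ∫_t^1 g = φ 1 - φ t
  have hFTC : ∀ t ∈ Set.Icc (0:ℝ) 1, ∫ x in Set.Icc t 1, g x = φ 1 - φ t := by
    intro t ht
    have hcont : ContinuousOn φ (Set.Icc t 1) :=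
      hφc.continuousOn.mono (Set.Icc_subset_Icc ht.1 le_rfl)
    have hderiv : ∀ x ∈ Set.Ioo t 1, HasDerivWithinAt φ (g x) (Set.Ioi x) x := by
      intro x hx
      have hx01 : x ∈ Set.Ioo (0:ℝ) 1 := ⟨ht.1.trans_lt hx.1, hx.2⟩
      have h1 : HasDerivWithinAt φ (g x) (Set.Icc 0 1) x :=
        (hφdiff x ⟨hx01.1.le, hx01.2.le⟩).hasDerivWithinAt
      exact (h1.hasDerivAt (Icc_mem_nhds hx01.1 hx01.2)).hasDerivWithinAt
    have hgint : IntervalIntegrable g volume t 1 := by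
      apply ContinuousOn.intervalIntegrable
      rw [Set.uIcc_of_le ht.2]
      exact hgcont.mono (Set.Icc_subset_Icc ht.1 le_rfl)
    have := intervalIntegral.integral_eq_sub_of_hasDeriv_right_of_le ht.2 hcont hderiv hgint
    rw [intervalIntegral.integral_of_le ht.2] at this
    rw [integral_Icc_eq_integral_Ioc]
    exact this
  -- Fubini applications
  have hIntK : 0 ≤ ∫ x in Set.Icc (0:ℝ) 1, K x := by
    have hf := aux_fubini ρ (fun _ => 1) hρ continuousOn_const
    simp only [one_mul] at hf
    have h2 : ∫ t in Set.Icc (0:ℝ) 1, ρ t * (∫ x in Set.Icc t 1, (1:ℝ)) =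
        ∫ t in Set.Icc (0:ℝ) 1, (ρ t - t * ρ t) := by
      refine setIntegral_congr_fun measurableSet_Icc (fun t ht => ?_)
      rw [setIntegral_const, Real.volume_real_Icc_of_le ht.2, smul_eq_mul, mul_one]
      ring
    have hi2 : IntegrableOn (fun t => t * ρ t) (Set.Icc (0:ℝ) 1) :=
      hρ.continuousOn_mul continuousOn_id isCompact_Icc
    rw [hf, h2, integral_sub hρ hi2, hmass] at *
    linarith
  have hB : ∫ x in Set.Icc (0:ℝ) 1, g x * K x = - ∫ x in Set.Icc (0:ℝ) 1, φ x * ρ x := by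
    have hf := aux_fubini ρ g hρ hgcont
    have h2 : ∫ t in Set.Icc (0:ℝ) 1, ρ t * (∫ x in Set.Icc t 1, g x) =
        ∫ t in Set.Icc (0:ℝ) 1, (φ 1 * ρ t - φ t * ρ t) := by
      refine setIntegral_congr_fun measurableSet_Icc (fun t ht => ?_)
      rw [hFTC t ht]; ring
    have hφρ : IntegrableOn (fun t => φ t * ρ t) (Set.Icc (0:ℝ) 1) :=
      hρ.continuousOn_mul hφc.continuousOn isCompact_Icc
    have hφ1ρ : IntegrableOn (fun t => φ 1 * ρ t) (Set.Icc (0:ℝ) 1) := hρ.const_mul _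
    rw [hf, h2, integral_sub hφ1ρ hφρ, integral_const_mul, hmass, mul_zero]
    ring
  -- integrabilities
  have hKint : IntegrableOn K (Set.Icc (0:ℝ) 1) := hKcont.integrableOn_Icc
  have hgKint : IntegrableOn (fun x => g x * K x) (Set.Icc (0:ℝ) 1) :=
    hKint.continuousOn_mul hgcont isCompact_Icc
  have hhint : IntegrableOn (fun x => (g c - g x) * K x) (Set.Icc (0:ℝ) 1) :=
    hKint.continuousOn_mul (continuousOn_const.sub hgcont) isCompact_Icc
  -- h nonneg
  have hhnonneg : ∀ x ∈ Set.Icc (0:ℝ) 1, 0 ≤ (g c - g x) * K x := by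
    intro x hx
    rcases le_or_gt x c with h | h
    · have h1 : g x ≤ g c := by
        rcases eq_or_lt_of_le h with he | hl
        · rw [he]
        · exact (hgmono hx hc01 hl).le
      exact mul_nonneg (by linarith) (hKpos x hx h)
    · have h1 : g c ≤ g x := (hgmono hc01 hx h).le
      have h2 := mul_nonneg (neg_nonneg.mpr (by linarith : g c - g x ≤ 0))
        (neg_nonneg.mpr (hKneg x hx h))
      rwa [neg_mul_neg] at h2
  -- existence of a point where K ≠ 0
  have hx0 : ∃ x₀ ∈ Set.Ioo (0:ℝ) 1, K x₀ ≠ 0 := by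
    have key : ∀ p q : ℝ, 0 ≤ p → q ≤ 1 → p < q →
        ((∀ z ∈ Set.Ioo p q, 0 < ρ z) ∨ (∀ z ∈ Set.Ioo p q, ρ z < 0)) →
        ∃ x₀ ∈ Set.Ioo (0:ℝ) 1, K x₀ ≠ 0 := by
      intro p q hp hq hpq hsign
      set p' := p + (q - p)/3 with hp'
      set q' := p + 2*(q - p)/3 with hq'
      have hpp' : p < p' := by rw [hp']; linarith
      have hp'q' : p' < q' := by rw [hp', hq']; linarith
      have hq'q : q' < q := by rw [hq']; linarith
      have hsub : Set.Ioo p' q' ⊆ Set.Ioo p q := fun z hz =>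
        ⟨hpp'.trans hz.1, hz.2.trans hq'q⟩
      have hint : IntegrableOn ρ (Set.Ioo p' q') :=
        (hρsub p q hp hq).mono hsub le_rfl
      have hdiff : K q' - K p' = ∫ t in Set.Ioo p' q', ρ t :=
        hKdiff p' q' (by linarith) hp'q'.le (by linarith)
      have hKne : K p' ≠ K q' := by
        rcases hsign with hs | hs
        · have hgt : 0 < ∫ t in Set.Ioo p' q', ρ t :=
            aux_pos ρ p' q' hint hp'q' (fun z hz => hs z (hsub hz))
          intro hh
          rw [hh, sub_self] at hdiff
          linarith
        · have hneg' := aux_pos (fun t => -ρ t) p' q' hint.neg hp'q'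
            (fun z hz => by simpa using (hs z (hsub hz)))
          rw [integral_neg] at hneg'
          intro hh
          rw [hh, sub_self] at hdiff
          linarith
      rcases ne_or_eq (K p') 0 with h | h
      · exact ⟨p', ⟨by linarith, by linarith⟩, h⟩
      · refine ⟨q', ⟨by linarith, by linarith⟩, fun hq0 => hKne ?_⟩
        rw [h, hq0]
    have htri : 0 < a ∨ a < b ∨ b < 1 := by
      by_contra hcon
      push_neg at hcon
      obtain ⟨h1, h2, h3⟩ := hcon
      have : a = 0 := le_antisymm h1 ha0
      have : b = a := le_antisymm h2 hab
      linarith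
    rcases htri with h | h | h
    · exact key 0 a le_rfl (hab.trans hb1) h (Or.inl hpos1)
    · exact key a b ha0 hb1 h (Or.inr hneg)
    · exact key b 1 (ha0.trans hab) le_rfl h (Or.inl hpos2)
  obtain ⟨x₀, hx₀mem, hx₀ne⟩ := hx0
  -- positive measure of support
  have hsupp : 0 < volume (Function.support (fun x => (g c - g x) * K x) ∩ Set.Icc (0:ℝ) 1) := by
    have hKat : ContinuousAt K x₀ :=
      hKcont.continuousAt (Icc_mem_nhds hx₀mem.1 hx₀mem.2)
    have hev1 : {x : ℝ | K x ≠ 0} ∈ nhds x₀ := hKat.eventually_ne hx₀ne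
    have hev2 : Set.Ioo (0:ℝ) 1 ∈ nhds x₀ := Ioo_mem_nhds hx₀mem.1 hx₀mem.2
    have hE : {x : ℝ | K x ≠ 0} ∩ Set.Ioo (0:ℝ) 1 ∈ nhds x₀ := Filter.inter_mem hev1 hev2
    rw [Metric.mem_nhds_iff] at hE
    obtain ⟨ε, hε, hball⟩ := hE
    rw [Real.ball_eq_Ioo] at hball
    have hsub2 : Set.Ioo (x₀ - ε) (x₀ + ε) \ {c} ⊆
        Function.support (fun x => (g c - g x) * K x) ∩ Set.Icc (0:ℝ) 1 := by
      rintro z ⟨hz1, hz2⟩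
      have hz3 := hball hz1
      have hz01 : z ∈ Set.Ioo (0:ℝ) 1 := hz3.2
      have hzK : K z ≠ 0 := hz3.1
      have hzc : z ≠ c := by simpa using hz2
      have hzIcc : z ∈ Set.Icc (0:ℝ) 1 := ⟨hz01.1.le, hz01.2.le⟩
      refine ⟨?_, hzIcc⟩
      have hgne : g c - g z ≠ 0 := by
        rcases lt_or_gt_of_ne hzc with h | h
        · exact sub_ne_zero.mpr (hgmono hzIcc hc01 h).ne'
        · exact sub_ne_zero.mpr (hgmono hc01 hzIcc h).ne
      exact Function.mem_support.mpr (mul_ne_zero hgne hzK)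
    calc (0:ENNReal) < volume (Set.Ioo (x₀ - ε) (x₀ + ε) \ {c}) := by
          rw [measure_diff_null (measure_singleton c), Real.volume_Ioo]
          exact ENNReal.ofReal_pos.mpr (by linarith)
      _ ≤ _ := measure_mono hsub2
  -- final assembly
  have hhpos : 0 < ∫ x in Set.Icc (0:ℝ) 1, (g c - g x) * K x := by
    rw [setIntegral_pos_iff_support_of_nonneg_ae
      (ae_restrict_of_forall_mem measurableSet_Icc hhnonneg) hhint]
    exact hsupp
  have hsplit : ∫ x in Set.Icc (0:ℝ) 1, (g c - g x) * K x =
      g c * (∫ x in Set.Icc (0:ℝ) 1, K x) - ∫ x in Set.Icc (0:ℝ) 1, g x * K x := by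
    have heq : ∀ x, (g c - g x) * K x = g c * K x - g x * K x := fun x => by ring
    simp_rw [heq]
    rw [integral_sub (hKint.const_mul _) hgKint, integral_const_mul]
  rw [hB] at hsplit
  have hterm : 0 ≤ (- g c) * ∫ x in Set.Icc (0:ℝ) 1, K x :=
    mul_nonneg (neg_nonneg.mpr hgc) hIntK
  nlinarith [hhpos, hsplit, hterm]
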